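/- arXiv:2510.16876 — 7 statements merged into one kernel-verified Lean document; each statement's English description precedes it below -/
import Mathlib

section
/- Let A and B be associative algebras over a field F with char F ≠ 2, and let φ : A → B be a Jordan homomorphism. Then φ([x,y]²) = [φ(x),φ(y)]² for all x, y ∈ A. -/
theorem jordan_hom_preserves_commutator_square
    {F A B : Type*} [Field F] (h2 : (2 : F) ≠ 0)
    [NonUnitalRing A] [Module F A] [SMulCommClass F A A] [IsScalarTower F A A]
    [NonUnitalRing B] [Module F B] [SMulCommClass F B B] [IsScalarTower F B B]
    (φ : A →ₗ[F] B) (hφ : ∀ x : A, φ (x * x) = φ x * φ x) :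
    ∀ x y : A,
      φ ((x * y - y * x) * (x * y - y * x)) =
        (φ x * φ y - φ y * φ x) * (φ x * φ y - φ y * φ x) := by
  have cancel2 : ∀ b c : B, b + b = c + c → b = c := by
    intro b c h
    apply smul_right_injective B h2
    show (2:F) • b = (2:F) • c
    rw [two_smul, two_smul]
    exact h
  -- polarization
  have P : ∀ x y : A, φ (x * y + y * x) = φ x * φ y + φ y * φ x := by
    intro x y
    have h1 : (x + y) * (x + y) = x * x + (x * y + y * x) + y * y := by
      noncomm_ring
    have h := hφ (x + y)
    rw [h1] at h
    simp only [map_add, hφ] at h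
    have h2' : (φ x + φ y) * (φ x + φ y) =
        φ x * φ x + (φ x * φ y + φ y * φ x) + φ y * φ y := by noncomm_ring
    rw [h2'] at h
    rw [map_add]
    exact add_left_cancel (add_right_cancel h)
  -- triple product
  have T : ∀ x y : A, φ (x * y * x) = φ x * φ y * φ x := by
    intro x y
    have h := P (x * y + y * x) x
    have h1 : (x * y + y * x) * x + x * (x * y + y * x) =
        ((x * x) * y + y * (x * x)) + (x * y * x + x * y * x) := by
      noncomm_ring
    rw [h1, map_add, P (x * x) y, hφ x, map_add, P x y] at h
    have h3 : φ (x * y * x) + φ (x * y * x) = φ x * φ y * φ x + φ x * φ y * φ x := by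
      have := h
      have key : (φ x * φ y + φ y * φ x) * φ x + φ x * (φ x * φ y + φ y * φ x) =
          (φ x * φ x * φ y + φ y * (φ x * φ x)) +
            (φ x * φ y * φ x + φ x * φ y * φ x) := by noncomm_ring
      rw [key] at this
      exact add_left_cancel this
    exact cancel2 _ _ h3
  intro x y
  have h1 : (x * y - y * x) * (x * y - y * x) =
      ((x * y * x) * y + y * (x * y * x)) - x * (y * y) * x - y * (x * x) * y := by
    noncomm_ring
  rw [h1, map_sub, map_sub, P (x * y * x) y, T x (y * y), T y (x * x), T x y,
    hφ x, hφ y]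
  noncomm_ring
end

section
/- Let A and B be associative algebras over a field F with char F ≠ 2, and let φ : A → B be a Jordan homomorphism. Define h(a,b) = φ(ab) − φ(a)φ(b) and k(a,b) = φ(ab) − φ(b)φ(a). Then h(a,b)·k(a,b) = 0 for all a, b ∈ A. -/
theorem jordan_hom_hk_eq_zero
    {F A B : Type*} [Field F] (h2 : (2 : F) ≠ 0)
    [NonUnitalRing A] [Module F A] [SMulCommClass F A A] [IsScalarTower F A A]
    [NonUnitalRing B] [Module F B] [SMulCommClass F B B] [IsScalarTower F B B]
    (φ : A →ₗ[F] B) (hφ : ∀ x : A, φ (x * x) = φ x * φ x) :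
    ∀ a b : A, (φ (a * b) - φ a * φ b) * (φ (a * b) - φ b * φ a) = 0 := by
  -- polarized identity
  have L1 : ∀ x y : A, φ (x * y + y * x) = φ x * φ y + φ y * φ x := by
    intro x y
    have h := hφ (x + y)
    simp only [mul_add, add_mul, map_add, hφ x, hφ y] at h
    rw [map_add]
    have h' : φ (x * y) + φ (y * x) + (φ x * φ x + φ y * φ y)
        = φ x * φ y + φ y * φ x + (φ x * φ x + φ y * φ y) := by
      calc φ (x * y) + φ (y * x) + (φ x * φ x + φ y * φ y)
          = φ x * φ x + φ (y * x) + (φ (x * y) + φ y * φ y) := by abel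
        _ = φ x * φ x + φ y * φ x + (φ x * φ y + φ y * φ y) := h
        _ = φ x * φ y + φ y * φ x + (φ x * φ x + φ y * φ y) := by abel
    exact add_right_cancel h'
  have L2 : ∀ x y : A, φ (x * y * x) = φ x * φ y * φ x := by
    intro x y
    have h := L1 x (x * y + y * x)
    have hA : x * (x * y + y * x) + (x * y + y * x) * x
        = (x * x * y + y * (x * x)) + (2 : F) • (x * y * x) := by
      rw [two_smul]
      noncomm_ring
    rw [hA, map_add, map_smul, L1 (x*x) y, hφ x, L1 x y] at h
    have h' : (2:F) • φ (x*y*x) + (φ x * φ x * φ y + φ y * (φ x * φ x))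
        = (2:F) • (φ x * φ y * φ x) + (φ x * φ x * φ y + φ y * (φ x * φ x)) := by
      calc (2:F) • φ (x*y*x) + (φ x * φ x * φ y + φ y * (φ x * φ x))
          = φ x * φ x * φ y + φ y * (φ x * φ x) + (2:F) • φ (x*y*x) := by abel
        _ = φ x * (φ x * φ y + φ y * φ x) + (φ x * φ y + φ y * φ x) * φ x := h
        _ = (2:F) • (φ x * φ y * φ x) + (φ x * φ x * φ y + φ y * (φ x * φ x)) := by
            rw [two_smul]; noncomm_ring
    have h'' := add_right_cancel h'
    have := congrArg (fun t => (2:F)⁻¹ • t) h''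
    simpa [smul_smul, inv_mul_cancel₀ h2] using this
  -- linearized triple identity
  have L3 : ∀ x y z : A, φ (x * y * z + z * y * x) = φ x * φ y * φ z + φ z * φ y * φ x := by
    intro x y z
    have h := L2 (x + z) y
    have hA : (x + z) * y * (x + z)
        = (x * y * z + z * y * x) + (x * y * x + z * y * z) := by noncomm_ring
    rw [hA] at h
    simp only [map_add, L2] at h
    rw [map_add]
    have h' : φ (x * y * z) + φ (z * y * x) + (φ x * φ y * φ x + φ z * φ y * φ z)
        = (φ x * φ y * φ z + φ z * φ y * φ x) + (φ x * φ y * φ x + φ z * φ y * φ z) := by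
      rw [h]; noncomm_ring
    exact add_right_cancel h'
  intro a b
  have key := L3 a b (a * b)
  have hA : a * b * (a * b) + a * b * b * a = (a * b) * (a * b) + a * (b * b) * a := by
    noncomm_ring
  have e1 : φ ((a*b) * (a*b)) = φ (a*b) * φ (a*b) := hφ (a*b)
  have e2 : φ (a * (b*b) * a) = φ a * (φ b * φ b) * φ a := by rw [L2, hφ]
  rw [show a * b * (a * b) + (a * b) * b * a = (a*b)*(a*b) + a*(b*b)*a by noncomm_ring,
    map_add, e1, e2] at key
  have goal' : (φ (a * b) - φ a * φ b) * (φ (a * b) - φ b * φ a)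
      = φ (a*b) * φ (a*b) + φ a * (φ b * φ b) * φ a
        - (φ a * φ b * φ (a * b) + φ (a * b) * φ b * φ a) := by noncomm_ring
  rw [goal', key]
  abel
end

section
/- Let A and B be associative algebras over a field F with char F ≠ 2, and let φ : A → B be a Jordan homomorphism. Define h(a,b) = φ(ab) − φ(a)φ(b) and k(a,b) = φ(ab) − φ(b)φ(a). Then h(a,b)φ(x)k(a,b) + k(a,b)φ(x)h(a,b) = 0 for all a, b, x ∈ A. -/
theorem jordan_hom_hxk_plus_kxh_eq_zero
    {F A B : Type*} [Field F] (h2 : (2 : F) ≠ 0)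
    [NonUnitalRing A] [Module F A] [SMulCommClass F A A] [IsScalarTower F A A]
    [NonUnitalRing B] [Module F B] [SMulCommClass F B B] [IsScalarTower F B B]
    (φ : A →ₗ[F] B) (hφ : ∀ x : A, φ (x * x) = φ x * φ x) :
    ∀ a b x : A,
      (φ (a * b) - φ a * φ b) * φ x * (φ (a * b) - φ b * φ a) +
        (φ (a * b) - φ b * φ a) * φ x * (φ (a * b) - φ a * φ b) = 0 := by
  have polar : ∀ a b : A, φ (a * b + b * a) = φ a * φ b + φ b * φ a := by
    intro a b
    have h := hφ (a + b)
    rw [show (a + b) * (a + b) = a * a + (a * b + b * a) + b * b from by noncomm_ring] at h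
    simp only [map_add, hφ] at h
    rw [map_add]
    linear_combination (norm := noncomm_ring) h
  have trip : ∀ a x : A, φ (a * x * a) = φ a * φ x * φ a := by
    intro a x
    have h1 := polar a (a * x + x * a)
    rw [show a * (a * x + x * a) + (a * x + x * a) * a
        = (a * a * x + x * (a * a)) + (a * x * a + a * x * a) from by noncomm_ring] at h1
    rw [map_add, polar (a * a) x, polar a x, hφ a, map_add] at h1
    have key : φ (a * x * a) + φ (a * x * a) = φ a * φ x * φ a + φ a * φ x * φ a := by
      linear_combination (norm := noncomm_ring) h1
    have : (2 : F) • φ (a * x * a) = (2 : F) • (φ a * φ x * φ a) := by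
      rw [two_smul, two_smul]; exact key
    exact smul_right_injective B h2 this
  have trip2 : ∀ a x c : A, φ (a * x * c + c * x * a)
      = φ a * φ x * φ c + φ c * φ x * φ a := by
    intro a x c
    have h := trip (a + c) x
    rw [show (a + c) * x * (a + c)
        = a * x * a + (a * x * c + c * x * a) + c * x * c from by noncomm_ring] at h
    simp only [map_add, trip a x, trip c x] at h
    rw [map_add]
    linear_combination (norm := noncomm_ring) h
  intro a b x
  have e1 : φ a * φ b * φ x * (φ b * φ a) + φ b * φ a * φ x * (φ a * φ b)
      = φ (a * b) * φ x * φ (b * a) + φ (b * a) * φ x * φ (a * b) := by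
    have h := trip2 (a * b) x (b * a)
    rw [show (a * b) * x * (b * a) + (b * a) * x * (a * b)
        = a * (b * x * b) * a + b * (a * x * a) * b from by noncomm_ring,
      map_add, trip a (b * x * b), trip b (a * x * a), trip b x, trip a x] at h
    linear_combination (norm := noncomm_ring) h
  have e2 : φ (b * a) = φ a * φ b + φ b * φ a - φ (a * b) := by
    have h := polar a b
    rw [map_add] at h
    linear_combination (norm := noncomm_ring) h
  rw [e2] at e1
  linear_combination (norm := noncomm_ring) e1
end

section
/- Let A be an associative algebra over a field F with char F ≠ 2, let B be an associative algebra which is a domain (no zero divisors), and let φ : A → B be a Jordan homomorphism. Then φ is either an algebra homomorphism or an algebra antihomomorphism (i.e., either φ(ab) = φ(a)φ(b) for all a,b, or φ(ab) = φ(b)φ(a) for all a,b). -/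
theorem jacobson_rickart_domain
    {F A B : Type*} [Field F] (h2 : (2 : F) ≠ 0)
    [NonUnitalRing A] [Module F A] [SMulCommClass F A A] [IsScalarTower F A A]
    [NonUnitalRing B] [Module F B] [SMulCommClass F B B] [IsScalarTower F B B]
    [NoZeroDivisors B]
    (φ : A →ₗ[F] B) (hφ : ∀ x : A, φ (x * x) = φ x * φ x) :
    (∀ a b : A, φ (a * b) = φ a * φ b) ∨ (∀ a b : A, φ (a * b) = φ b * φ a) := by
  -- cancellation of doubling in B
  have twocancel : ∀ x y : B, x + x = y + y → x = y := by
    intro x y h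
    have hx : (2 : F) • x = (2 : F) • y := by
      have h1 : ((1 : F) + 1) • x = ((1 : F) + 1) • y := by
        simpa [add_smul, one_smul] using h
      simpa [show ((2 : F)) = 1 + 1 by norm_num] using h1
    have := congrArg (fun z => (2 : F)⁻¹ • z) hx
    simpa [smul_smul, inv_mul_cancel₀ h2] using this
  -- polarized Jordan identity
  have polar : ∀ a b : A, φ (a * b + b * a) = φ a * φ b + φ b * φ a := by
    intro a b
    have h := hφ (a + b)
    have e : (a + b) * (a + b) = a * a + (a * b + b * a) + b * b := by noncomm_ring
    rw [e, map_add φ a b, map_add, map_add, hφ a, hφ b] at h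
    have h' : φ (a * b + b * a)
        = (φ a + φ b) * (φ a + φ b) - φ a * φ a - φ b * φ b := by
      rw [eq_sub_iff_add_eq, eq_sub_iff_add_eq, ← h]; abel
    rw [h']; noncomm_ring
  -- triple identity
  have triple : ∀ a b : A, φ (a * b * a) = φ a * φ b * φ a := by
    intro a b
    apply twocancel
    have e : a * b * a + a * b * a
        = (a * (a * b + b * a) + (a * b + b * a) * a) - ((a * a) * b + b * (a * a)) := by
      noncomm_ring
    calc φ (a * b * a) + φ (a * b * a)
        = φ (a * b * a + a * b * a) := (map_add φ _ _).symm
      _ = φ ((a * (a * b + b * a) + (a * b + b * a) * a) - ((a * a) * b + b * (a * a))) := by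
          rw [← e]
      _ = φ (a * (a * b + b * a) + (a * b + b * a) * a) - φ ((a * a) * b + b * (a * a)) :=
          map_sub φ _ _
      _ = (φ a * φ (a * b + b * a) + φ (a * b + b * a) * φ a)
            - (φ (a * a) * φ b + φ b * φ (a * a)) := by
          rw [polar a (a * b + b * a), polar (a * a) b]
      _ = φ a * φ b * φ a + φ a * φ b * φ a := by rw [polar a b, hφ a]; noncomm_ring
  -- linearized triple identity
  have lintriple : ∀ a b c : A,
      φ (a * b * c + c * b * a) = φ a * φ b * φ c + φ c * φ b * φ a := by
    intro a b c
    have h := triple (a + c) b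
    have e : (a + c) * b * (a + c) = a * b * a + (a * b * c + c * b * a) + c * b * c := by
      noncomm_ring
    rw [e, map_add φ a c, map_add, map_add, triple a b, triple c b] at h
    have h' : φ (a * b * c + c * b * a)
        = (φ a + φ c) * φ b * (φ a + φ c) - φ a * φ b * φ a - φ c * φ b * φ c := by
      rw [eq_sub_iff_add_eq, eq_sub_iff_add_eq, ← h]; abel
    rw [h']; noncomm_ring
  -- for each pair, hom or antihom
  have key : ∀ a b : A, φ (a * b) = φ a * φ b ∨ φ (a * b) = φ b * φ a := by
    intro a b
    have h5 := lintriple a b (a * b)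
    have e2 : a * b * b * a = a * (b * b) * a := by noncomm_ring
    rw [map_add, hφ, e2, triple, hφ] at h5
    have hz : (φ (a * b) - φ a * φ b) * (φ (a * b) - φ b * φ a) = 0 := by
      have expand : (φ (a * b) - φ a * φ b) * (φ (a * b) - φ b * φ a)
          = (φ (a * b) * φ (a * b) + φ a * (φ b * φ b) * φ a)
            - (φ a * φ b * φ (a * b) + φ (a * b) * φ b * φ a) := by noncomm_ring
      rw [expand, h5, sub_self]
    rcases mul_eq_zero.mp hz with h | h
    · exact Or.inl (sub_eq_zero.mp h)
    · exact Or.inr (sub_eq_zero.mp h)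
  -- for each a, uniformly hom or uniformly antihom in b
  have step1 : ∀ a : A, (∀ b, φ (a * b) = φ a * φ b) ∨ (∀ b, φ (a * b) = φ b * φ a) := by
    intro a
    by_contra hc
    push_neg at hc
    obtain ⟨⟨b₁, hb₁⟩, ⟨b₂, hb₂⟩⟩ := hc
    have q1 : φ (a * b₁) = φ b₁ * φ a := (key a b₁).resolve_left hb₁
    have p2 : φ (a * b₂) = φ a * φ b₂ := (key a b₂).resolve_right hb₂
    have hsum : φ (a * (b₁ + b₂)) = φ (a * b₁) + φ (a * b₂) := by
      rw [mul_add, map_add]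
    rcases key a (b₁ + b₂) with h | h
    · apply hb₁
      have : φ (a * b₁) + φ (a * b₂) = φ a * φ b₁ + φ a * φ b₂ := by
        rw [← hsum, h, map_add, mul_add]
      rw [p2] at this
      exact add_right_cancel this
    · apply hb₂
      have : φ (a * b₁) + φ (a * b₂) = φ b₁ * φ a + φ b₂ * φ a := by
        rw [← hsum, h, map_add, add_mul]
      rw [q1] at this
      exact add_left_cancel this
  -- global dichotomy
  by_contra hc
  push_neg at hc
  obtain ⟨⟨a₁, b₁, h1⟩, ⟨a₂, b₂, h2⟩⟩ := hc
  have q1 : ∀ b, φ (a₁ * b) = φ b * φ a₁ := by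
    rcases step1 a₁ with h | h
    · exact absurd (h b₁) h1
    · exact h
  have p2 : ∀ b, φ (a₂ * b) = φ a₂ * φ b := by
    rcases step1 a₂ with h | h
    · exact h
    · exact absurd (h b₂) h2
  have hsum : ∀ b, φ ((a₁ + a₂) * b) = φ (a₁ * b) + φ (a₂ * b) := by
    intro b; rw [add_mul, map_add]
  rcases step1 (a₁ + a₂) with h | h
  · apply h1
    have := h b₁
    rw [hsum, map_add, add_mul, p2 b₁] at this
    exact add_right_cancel this
  · apply h2
    have := h b₂
    rw [hsum, map_add, mul_add, q1 b₂] at this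
    exact add_left_cancel this
end

section
/- Let A be an associative algebra over a field F with char F ≠ 2 and let B be a prime associative algebra. Every surjective Jordan homomorphism φ : A → B is either a homomorphism or an antihomomorphism. -/
theorem herstein_prime
    {F A B : Type*} [Field F] (h2 : (2 : F) ≠ 0)
    [NonUnitalRing A] [Module F A] [SMulCommClass F A A] [IsScalarTower F A A]
    [NonUnitalRing B] [Module F B] [SMulCommClass F B B] [IsScalarTower F B B]
    (hprime : ∀ a b : B, (∀ y : B, a * y * b = 0) → a = 0 ∨ b = 0)
    (φ : A →ₗ[F] B) (hφ : ∀ x : A, φ (x * x) = φ x * φ x)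
    (hsurj : Function.Surjective φ) :
    (∀ a b : A, φ (a * b) = φ a * φ b) ∨ (∀ a b : A, φ (a * b) = φ b * φ a) := by
  have cancel2 : ∀ u v : B, u + u = v + v → u = v := by
    intro u v h
    have h' : (2:F) • u = (2:F) • v := by rw [two_smul, two_smul]; exact h
    have := congrArg (fun z => (2:F)⁻¹ • z) h'
    simpa [smul_smul, inv_mul_cancel₀ h2] using this
  -- polarized Jordan identity
  have pol : ∀ x y : A, φ (x*y) + φ (y*x) = φ x * φ y + φ y * φ x := by
    intro x y
    have h := hφ (x + y)
    rw [show (x+y)*(x+y) = x*x + (x*y + y*x) + y*y from by noncomm_ring] at h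
    simp only [map_add] at h
    rw [hφ x, hφ y] at h
    linear_combination (norm := noncomm_ring) h
  have sq2 : ∀ x y : A, φ (x*y*x) = φ x * φ y * φ x := by
    intro x y
    have e := pol x (x*y + y*x)
    rw [show x*(x*y+y*x) = (x*x)*y + x*y*x from by noncomm_ring,
        show (x*y+y*x)*x = x*y*x + y*(x*x) from by noncomm_ring] at e
    simp only [map_add] at e
    have e2 := pol (x*x) y
    rw [hφ x] at e2
    have e3 := pol x y
    apply cancel2
    linear_combination (norm := noncomm_ring) e - e2 + φ x * e3 + e3 * φ x
  have trip : ∀ x y z : A, φ (x*y*z) + φ (z*y*x) = φ x * φ y * φ z + φ z * φ y * φ x := by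
    intro x y z
    have e := sq2 (x+z) y
    rw [show (x+z)*y*(x+z) = x*y*x + (x*y*z + z*y*x) + z*y*z from by noncomm_ring] at e
    simp only [map_add] at e
    rw [sq2 x y, sq2 z y] at e
    linear_combination (norm := noncomm_ring) e
  have key : ∀ a b : A, ∀ y : B,
      (φ (a*b) - φ a * φ b) * y * (φ (a*b) - φ b * φ a)
        + (φ (a*b) - φ b * φ a) * y * (φ (a*b) - φ a * φ b) = 0 := by
    intro a b y
    obtain ⟨c, rfl⟩ := hsurj y
    have h1 := trip (a*b) c (b*a)
    rw [show (a*b)*c*(b*a) = a*(b*c*b)*a from by noncomm_ring,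
        show (b*a)*c*(a*b) = b*(a*c*a)*b from by noncomm_ring,
        sq2 a (b*c*b), sq2 b (a*c*a), sq2 b c, sq2 a c] at h1
    have h2 := pol a b
    linear_combination (norm := noncomm_ring)
      h1 + φ (a*b) * φ c * h2 + h2 * φ c * φ (a*b)
  -- in a prime ring, u y v + v y u = 0 for all y forces u = 0 or v = 0
  have prime2 : ∀ u v : B, (∀ y : B, u*y*v + v*y*u = 0) → u = 0 ∨ v = 0 := by
    intro u v h
    by_cases hv : v = 0
    · exact Or.inr hv
    have hn : ∀ x : B, v*x*u = -(u*x*v) := by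
      intro x
      linear_combination (norm := noncomm_ring) h x
    have claim : ∀ x w : B, v * x * (u*w*v) = 0 := by
      intro x w
      have c1 : v*x*(u*w*v) = -(u*(x*v*w)*v) := by
        have := hn x
        linear_combination (norm := noncomm_ring) this * (w*v)
      have c2 : u*(x*v*w)*v = -(v*(x*v*w)*u) := by
        linear_combination (norm := noncomm_ring) h (x*v*w)
      have c3 : v*(x*v*w)*u = -(v*x*(u*w*v)) := by
        have := hn w
        linear_combination (norm := noncomm_ring) (v*x) * this
      have : v*x*(u*w*v) + v*x*(u*w*v) = 0 + 0 := by
        linear_combination (norm := noncomm_ring) c1 - c2 + c3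
      exact cancel2 _ _ this
    have hz : ∀ w : B, u*w*v = 0 := fun w =>
      (hprime v (u*w*v) (fun x => claim x w)).resolve_left hv
    exact hprime u v hz
  have dich : ∀ a b : A, φ (a*b) = φ a * φ b ∨ φ (a*b) = φ b * φ a := by
    intro a b
    rcases prime2 _ _ (key a b) with h | h
    · left; exact sub_eq_zero.mp h
    · right; exact sub_eq_zero.mp h
  -- for each a, φ(a·-) is multiplicative or antimultiplicative
  have row : ∀ a : A, (∀ b : A, φ (a*b) = φ a * φ b) ∨ (∀ b : A, φ (a*b) = φ b * φ a) := by
    intro a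
    by_contra hc
    push_neg at hc
    obtain ⟨⟨b1, hb1⟩, ⟨b2, hb2⟩⟩ := hc
    have e1 : φ (a*b1) = φ b1 * φ a := (dich a b1).resolve_left hb1
    have e2 : φ (a*b2) = φ a * φ b2 := (dich a b2).resolve_right hb2
    have expand : φ (a*(b1+b2)) = φ (a*b1) + φ (a*b2) := by
      rw [mul_add, map_add]
    rcases dich a (b1+b2) with h | h
    · rw [expand, map_add] at h
      apply hb1
      linear_combination (norm := noncomm_ring) h - e2
    · rw [expand, map_add] at h
      apply hb2
      linear_combination (norm := noncomm_ring) h - e1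
  by_contra hc
  push_neg at hc
  obtain ⟨⟨a1, b1, hb1⟩, ⟨a2, b2, hb2⟩⟩ := hc
  have r1 : ∀ b : A, φ (a1*b) = φ b * φ a1 := by
    rcases row a1 with h | h
    · exact absurd (h b1) hb1
    · exact h
  have r2 : ∀ b : A, φ (a2*b) = φ a2 * φ b := by
    rcases row a2 with h | h
    · exact h
    · exact absurd (h b2) hb2
  have expand : ∀ b : A, φ ((a1+a2)*b) = φ (a1*b) + φ (a2*b) := by
    intro b; rw [add_mul, map_add]
  rcases row (a1+a2) with h | h
  · have hb := h b1
    rw [expand, map_add] at hb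
    apply hb1
    linear_combination (norm := noncomm_ring) hb - r2 b1
  · have hb := h b2
    rw [expand, map_add] at hb
    apply hb2
    linear_combination (norm := noncomm_ring) hb - r1 b2
end

section
/- Let A be an associative algebra over a field F and let δ : A → A be a linear map satisfying δ(xy) = δ(y)x + yδ(x) for all x, y ∈ A (an antiderivation). Then [x,y]δ(x) = 0 for all x, y ∈ A. -/
theorem antiderivation_commutator_annihilates
    {F A : Type*} [Field F]
    [NonUnitalRing A] [Module F A] [SMulCommClass F A A] [IsScalarTower F A A]
    (δ : A →ₗ[F] A) (hδ : ∀ x y : A, δ (x * y) = δ y * x + y * δ x) :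
    ∀ x y : A, (x * y - y * x) * δ x = 0 := by
  intro x y
  have h1 : δ (x * x * y) = δ y * (x * x) + y * (δ x * x + x * δ x) := by
    rw [hδ, hδ]
  have h2 : δ (x * (x * y)) = (δ y * x + y * δ x) * x + x * y * δ x := by
    rw [hδ, hδ]
  rw [← mul_assoc] at h2
  have h3 := h1.symm.trans h2
  have h4 : x * y * δ x = y * x * δ x := by
    simp only [mul_add, add_mul, mul_assoc, ← add_assoc] at h3
    have h5 := add_left_cancel h3
    rw [mul_assoc, mul_assoc, h5]
  rw [sub_mul, h4, sub_self]
end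

section
/- Let A be a semiprime associative algebra over a field F with char F ≠ 2 and let δ : A → A be a Jordan derivation, i.e., δ(x²) = δ(x)x + xδ(x) for all x ∈ A. Then δ is a derivation: δ(xy) = δ(x)y + xδ(y) for all x, y ∈ A. -/
section CusackAux

variable {F A : Type*} [Field F] [NonUnitalRing A] [Module F A]
  [SMulCommClass F A A] [IsScalarTower F A A]

omit [SMulCommClass F A A] [IsScalarTower F A A] in
/-- 2-torsion-freeness from `(2 : F) ≠ 0`. -/
private lemma cusack_tf (h2 : (2 : F) ≠ 0) {a : A} (h : a + a = 0) : a = 0 := by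
  have h' : (2 : F) • a = 0 := by rw [two_smul]; exact h
  have := congrArg (fun t => (2 : F)⁻¹ • t) h'
  simpa [smul_smul, inv_mul_cancel₀ h2] using this

omit [SMulCommClass F A A] [IsScalarTower F A A] in
private lemma cusack_cancel (h2 : (2 : F) ≠ 0) {a b : A} (h : a + a = b + b) : a = b := by
  have h0 : (a - b) + (a - b) = 0 := by
    calc (a - b) + (a - b) = (a + a) - (b + b) := by abel
    _ = 0 := by rw [h]; abel
  exact sub_eq_zero.mp (cusack_tf h2 h0)

omit [SMulCommClass F A A] [IsScalarTower F A A] in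
/-- In a semiprime ring, `aRb = 0` implies `bRa = 0`. -/
private lemma cusack_flip (hsp : ∀ a : A, (∀ x : A, a * x * a = 0) → a = 0)
    (a b : A) (h : ∀ z : A, a * z * b = 0) : ∀ z : A, b * z * a = 0 := by
  intro z
  apply hsp
  intro t
  have e : (b * z * a) * t * (b * z * a) = b * z * ((a * t * b) * (z * a)) := by noncomm_ring
  rw [h t, zero_mul, mul_zero] at e
  exact e

omit [SMulCommClass F A A] [IsScalarTower F A A] in
/-- Brešar's lemma: in a 2-torsion-free semiprime ring, if `axb + bxa = 0` for all `x`,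
then `axb = 0` for all `x`. -/
private lemma cusack_bresar (h2 : (2 : F) ≠ 0)
    (hsp : ∀ a : A, (∀ x : A, a * x * a = 0) → a = 0)
    (a b : A) (h : ∀ m : A, a * m * b + b * m * a = 0) : ∀ z : A, a * z * b = 0 := by
  intro z
  apply hsp
  intro t
  apply cusack_tf h2
  have e1 : (a * z * b + b * z * a) * (t * (a * z * b)) = 0 := by rw [h z, zero_mul]
  have e2 : (a * (z * a * t) * b + b * (z * a * t) * a) * (z * b) = 0 := by
    rw [h (z * a * t), zero_mul]
  have e3 : (a * z) * ((a * t * b + b * t * a) * (z * b)) = 0 := by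
    rw [h t, zero_mul, mul_zero]
  linear_combination (norm := noncomm_ring) e1 - e2 + e3

omit [SMulCommClass F A A] [IsScalarTower F A A] in
/-- Linearization machinery: if `G u v * z * C u v = 0` for biadditive `G, C`, then the
fully mixed version `G x y * z * C u v = 0` holds. -/
private lemma cusack_bilin (hsp : ∀ a : A, (∀ x : A, a * x * a = 0) → a = 0)
    (G C : A → A → A)
    (hGa : ∀ x u y : A, G (x + u) y = G x y + G u y)
    (hGb : ∀ x y v : A, G x (y + v) = G x y + G x v)
    (hCa : ∀ x u y : A, C (x + u) y = C x y + C u y)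
    (hCb : ∀ x y v : A, C x (y + v) = C x y + C x v)
    (h0 : ∀ u v z : A, G u v * z * C u v = 0) :
    ∀ x y u v z : A, G x y * z * C u v = 0 := by
  have h0' : ∀ u v z : A, C u v * z * G u v = 0 := fun u v => cusack_flip hsp _ _ (h0 u v)
  have hB : ∀ x u y z : A, G x y * z * C u y = 0 := by
    intro x u y z
    have cross : ∀ m : A, G x y * m * C u y + G u y * m * C x y = 0 := by
      intro m
      have e := h0 (x + u) y m
      rw [hGa, hCa] at e
      linear_combination (norm := noncomm_ring) e - h0 x y m - h0 u y m
    apply hsp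
    intro t
    have e1 : (G x y * z * C u y + G u y * z * C x y) * (t * (G x y * z * C u y)) = 0 := by
      rw [cross z, zero_mul]
    have e2 : G u y * z * ((C x y * t * G x y) * (z * C u y)) = 0 := by
      rw [h0' x y t, zero_mul, mul_zero]
    linear_combination (norm := noncomm_ring) e1 - e2
  have hB' : ∀ x u y z : A, C u y * z * G x y = 0 := fun x u y => cusack_flip hsp _ _ (hB x u y)
  intro x y u v z
  have cross : ∀ m : A, G x y * m * C u v + G x v * m * C u y = 0 := by
    intro m
    have e := hB x u (y + v) m
    rw [hGb, hCb] at e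
    linear_combination (norm := noncomm_ring) e - hB x u y m - hB x u v m
  apply hsp
  intro t
  have e1 : (G x y * z * C u v + G x v * z * C u y) * (t * (G x y * z * C u v)) = 0 := by
    rw [cross z, zero_mul]
  have e2 : G x v * z * ((C u y * t * G x y) * (z * C u v)) = 0 := by
    rw [hB' x u y t, zero_mul, mul_zero]
  linear_combination (norm := noncomm_ring) e1 - e2

omit [SMulCommClass F A A] [IsScalarTower F A A] in
/-- Centrality consequences of `g z [u,v] = 0`. -/
private lemma cusack_central (hsp : ∀ a : A, (∀ x : A, a * x * a = 0) → a = 0)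
    (g : A) (R1 : ∀ u v z : A, g * z * (u * v - v * u) = 0)
    (R2 : ∀ u v z : A, (u * v - v * u) * z * g = 0) :
    (∀ t : A, g * t = t * g) ∧ (∀ u v : A, g * (u * v - v * u) = 0) ∧
      (∀ u v : A, (u * v - v * u) * g = 0) := by
  refine ⟨?_, ?_, ?_⟩
  · intro t
    have h : g * t - t * g = 0 := by
      apply hsp
      intro z
      have e1 : g * (t * z) * (g * t - t * g) = 0 := R1 g t (t * z)
      have e2 : g * z * (g * t - t * g) = 0 := R1 g t z
      linear_combination (norm := noncomm_ring) e1 - t * e2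
    linear_combination (norm := noncomm_ring) h
  · intro u v
    apply hsp
    intro t
    have e : (g * (u * v - v * u)) * t * (g * (u * v - v * u))
        = g * (((u * v - v * u) * t * g) * (u * v - v * u)) := by noncomm_ring
    rw [R2 u v t, zero_mul, mul_zero] at e
    exact e
  · intro u v
    apply hsp
    intro t
    have e : ((u * v - v * u) * g) * t * ((u * v - v * u) * g)
        = (u * v - v * u) * ((g * t * (u * v - v * u)) * g) := by noncomm_ring
    rw [R1 u v t, zero_mul, mul_zero] at e
    exact e

omit [SMulCommClass F A A] [IsScalarTower F A A] in
/-- The endgame: a central element `g` with `g c = c g = 0` and `2 g² = g δ(c)` vanishes. -/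
private lemma cusack_final (h2 : (2 : F) ≠ 0)
    (hsp : ∀ a : A, (∀ x : A, a * x * a = 0) → a = 0)
    (δ : A →ₗ[F] A) (hδ : ∀ x : A, δ (x * x) = δ x * x + x * δ x)
    (g c : A)
    (central : ∀ t : A, g * t = t * g)
    (hgc : g * c = 0) (hcg : c * g = 0)
    (h2g2 : g * g + g * g = g * δ c) : g = 0 := by
  -- the "diamond" identity: δg c + δc g + g δc + c δg = 0
  have diamond : δ g * c + δ c * g + g * δ c + c * δ g = 0 := by
    have h1 := hδ (g + c)
    rw [show (g + c) * (g + c) = g * g + (g * c + (c * g + c * c)) from by noncomm_ring,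
      hgc, hcg] at h1
    simp only [add_zero, zero_add] at h1
    rw [map_add, map_add, hδ g, hδ c] at h1
    linear_combination (norm := noncomm_ring) -h1
  -- multiply by g on the left : 2 g² δc = 0
  have hd : g * (δ g * c + δ c * g + g * δ c + c * δ g) = g * 0 := congrArg (g * ·) diamond
  rw [mul_zero] at hd
  have e1 : g * (δ g * c) = 0 := by
    rw [← mul_assoc, central (δ g), mul_assoc, hgc, mul_zero]
  have e3 : g * (c * δ g) = 0 := by
    rw [← mul_assoc, hgc, zero_mul]
  have e2 : δ c * g = g * δ c := (central (δ c)).symm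
  have hsum : (g * g) * δ c + (g * g) * δ c = 0 := by
    linear_combination (norm := noncomm_ring) hd - e1 - e3 - g * e2
  have hg2dc : (g * g) * δ c = 0 := cusack_tf h2 hsum
  -- g⁴ = 0
  have e4 : (g * g) * (g * δ c) = g * ((g * g) * δ c) := by noncomm_ring
  rw [hg2dc, mul_zero] at e4
  have hsum2 : (g * g) * (g * g) + (g * g) * (g * g) = 0 := by
    linear_combination (norm := noncomm_ring) (g * g) * h2g2 + e4
  have hg4 : (g * g) * (g * g) = 0 := cusack_tf h2 hsum2
  -- g² = 0
  have hgg : g * g = 0 := by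
    apply hsp
    intro z
    calc (g * g) * z * (g * g) = (g * g) * ((z * g) * g) := by noncomm_ring
      _ = (g * g) * ((g * z) * g) := by rw [← central z]
      _ = (g * g) * (g * (z * g)) := by noncomm_ring
      _ = (g * g) * (g * (g * z)) := by rw [← central z]
      _ = ((g * g) * (g * g)) * z := by noncomm_ring
      _ = 0 := by rw [hg4, zero_mul]
  -- g = 0
  apply hsp
  intro z
  calc g * z * g = (z * g) * g := by rw [central z]
    _ = z * (g * g) := by rw [mul_assoc]
    _ = 0 := by rw [hgg, mul_zero]

end CusackAux

theorem cusack_jordan_derivation_semiprime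
    {F A : Type*} [Field F] (h2 : (2 : F) ≠ 0)
    [NonUnitalRing A] [Module F A] [SMulCommClass F A A] [IsScalarTower F A A]
    (hsemiprime : ∀ a : A, (∀ x : A, a * x * a = 0) → a = 0)
    (δ : A →ₗ[F] A) (hδ : ∀ x : A, δ (x * x) = δ x * x + x * δ x) :
    ∀ x y : A, δ (x * y) = δ x * y + x * δ y := by
  -- linearized Jordan identity
  have L : ∀ u v : A, δ (u * v) + δ (v * u) = δ u * v + u * δ v + δ v * u + v * δ u := by
    intro u v
    have h1 := hδ (u + v)
    rw [show (u + v) * (u + v) = u * u + (u * v + (v * u + v * v)) from by noncomm_ring] at h1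
    simp only [map_add] at h1
    rw [hδ u, hδ v] at h1
    linear_combination (norm := noncomm_ring) h1
  -- Herstein's identity for x a x
  have J3 : ∀ x a : A, δ (x * a * x) = δ x * a * x + x * δ a * x + x * a * δ x := by
    intro x a
    apply cusack_cancel h2
    have h1 := L x (x * a + a * x)
    rw [show x * (x * a + a * x) = x * x * a + x * a * x from by noncomm_ring,
      show (x * a + a * x) * x = x * a * x + a * (x * x) from by noncomm_ring] at h1
    simp only [map_add] at h1
    have h2' := L (x * x) a
    have h3 := L x a
    have h4 := hδ x
    linear_combination (norm := noncomm_ring) h1 - h2' + x * h3 + h3 * x - a * h4 - h4 * a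
  -- linearized triple identity
  have T : ∀ x a y : A, δ (x * a * y) + δ (y * a * x) =
      δ x * a * y + x * δ a * y + x * a * δ y + δ y * a * x + y * δ a * x + y * a * δ x := by
    intro x a y
    have h1 := J3 (x + y) a
    rw [show (x + y) * a * (x + y) = x * a * x + (x * a * y + (y * a * x + y * a * y)) from by
      noncomm_ring] at h1
    simp only [map_add] at h1
    linear_combination (norm := noncomm_ring) h1 - J3 x a - J3 y a
  -- the key relation: G z c + c z G = 0
  have key : ∀ x y z : A,
      (δ (x * y) - δ x * y - x * δ y) * z * (x * y - y * x)
        + (x * y - y * x) * z * (δ (x * y) - δ x * y - x * δ y) = 0 := by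
    intro x y z
    have h1 := T (x * y) z (y * x)
    rw [show (x * y) * z * (y * x) = x * (y * z * y) * x from by noncomm_ring,
      show (y * x) * z * (x * y) = y * (x * z * x) * y from by noncomm_ring,
      J3 x (y * z * y), J3 y (x * z * x), J3 y z, J3 x z] at h1
    linear_combination (norm := noncomm_ring)
      (L x y) * (z * (x * y)) + ((x * y) * z) * (L x y) + h1
  -- Brešar's lemma: G z c = 0
  have keyA : ∀ x y z : A,
      (δ (x * y) - δ x * y - x * δ y) * z * (x * y - y * x) = 0 := fun x y =>
    cusack_bresar h2 hsemiprime _ _ (key x y)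
  -- full linearization: G x y z [u,v] = 0
  have keyfull : ∀ x y u v z : A,
      (δ (x * y) - δ x * y - x * δ y) * z * (u * v - v * u) = 0 := by
    refine cusack_bilin hsemiprime
      (fun u v => δ (u * v) - δ u * v - u * δ v) (fun u v => u * v - v * u)
      ?_ ?_ ?_ ?_ keyA
    · intro x u y
      rw [show (x + u) * y = x * y + u * y from by noncomm_ring, map_add, map_add]
      noncomm_ring
    · intro x y v
      rw [show x * (y + v) = x * y + x * v from by noncomm_ring]
      simp only [map_add]
      noncomm_ring
    · intro x u y
      noncomm_ring
    · intro x y v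
      noncomm_ring
  intro x y
  obtain ⟨central, gann, ann_g⟩ :=
    cusack_central hsemiprime (δ (x * y) - δ x * y - x * δ y)
      (fun u v z => keyfull x y u v z)
      (fun u v => cusack_flip hsemiprime _ _ (fun z => keyfull x y u v z))
  have anti := L x y
  have msub : δ (x * y - y * x) = δ (x * y) - δ (y * x) := map_sub δ _ _
  have h2g2 : (δ (x * y) - δ x * y - x * δ y) * (δ (x * y) - δ x * y - x * δ y)
        + (δ (x * y) - δ x * y - x * δ y) * (δ (x * y) - δ x * y - x * δ y)
      = (δ (x * y) - δ x * y - x * δ y) * δ (x * y - y * x) := by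
    have g1 := gann (δ x) y
    have g2 := gann x (δ y)
    linear_combination (norm := noncomm_ring)
      (δ (x * y) - δ x * y - x * δ y) * anti - (δ (x * y) - δ x * y - x * δ y) * msub - g1 - g2
  have gzero : δ (x * y) - δ x * y - x * δ y = 0 :=
    cusack_final h2 hsemiprime δ hδ _ (x * y - y * x) central (gann x y) (ann_g x y) h2g2
  linear_combination (norm := noncomm_ring) gzero
end
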